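/- Let Q be a real symmetric positive semidefinite n×n matrix with ker(Q) = span(1), n ≥ 2, and let Ω := 1ζᵀ + ζ1ᵀ − 2Q† with ζ := diagvec(Q†). Then the (n+1)×(n+1) bordered matrix [[0, 1ᵀ],[1, Ω]] is invertible. -/

import Mathlib

open Matrix Classical

/-- The Moore–Penrose pseudoinverse of a real matrix, defined via its four
characterizing Penrose equations (which have a unique solution). -/
noncomputable def pinv {m k : Type*} [Fintype m] [Fintype k]
    (A : Matrix m k ℝ) : Matrix k m ℝ :=
  if h : ∃ X : Matrix k m ℝ,
      A * X * A = A ∧ X * A * X = X ∧ (A * X)ᵀ = A * X ∧ (X * A)ᵀ = X * A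
  then h.choose else 0

theorem bordered_resistance_matrix_invertible
    {n : ℕ} (hn : 2 ≤ n) (Q : Matrix (Fin n) (Fin n) ℝ)
    (hQ : Q.PosSemidef)
    (hker : ∀ v : Fin n → ℝ, Q.mulVec v = 0 ↔ ∃ c : ℝ, v = fun _ => c)
    (ζ : Fin n → ℝ) (hζ : ζ = fun i => pinv Q i i)
    (Ω : Matrix (Fin n) (Fin n) ℝ)
    (hΩ : Ω = Matrix.of (fun _ j => ζ j) + Matrix.of (fun i _ => ζ i) - 2 • pinv Q) :
    IsUnit (Matrix.fromBlocks (0 : Matrix (Fin 1) (Fin 1) ℝ)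
      (Matrix.of fun _ _ => (1 : ℝ)) (Matrix.of fun _ _ => (1 : ℝ)) Ω).det := by
  classical
  have hnpos : (0:ℝ) < (n:ℝ) := by
    have : 0 < n := lt_of_lt_of_le (by norm_num) hn
    exact_mod_cast this
  have hnne : (n:ℝ) ≠ 0 := ne_of_gt hnpos
  set J : Matrix (Fin n) (Fin n) ℝ := Matrix.of (fun _ _ => (1:ℝ)) with hJ
  have hQsym : ∀ i j, Q i j = Q j i := by
    intro i j
    have := hQ.1
    have h2 := congrFun (congrFun this i) j
    simpa [Matrix.conjTranspose_apply] using h2.symm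
  have hQ1 : Q.mulVec (fun _ => (1:ℝ)) = 0 := (hker _).mpr ⟨1, rfl⟩
  have hrow : ∀ i, ∑ k, Q i k = 0 := by
    intro i
    have := congrFun hQ1 i
    simpa [Matrix.mulVec, dotProduct] using this
  have hcol : ∀ j, ∑ k, Q k j = 0 := by
    intro j
    have := hrow j
    calc ∑ k, Q k j = ∑ k, Q j k := by simp_rw [fun k => hQsym k j]
    _ = 0 := hrow j
  have hQJ : Q * J = 0 := by
    ext i j
    simp [Matrix.mul_apply, hJ, hrow i]
  have hJQ : J * Q = 0 := by
    ext i j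
    simp [Matrix.mul_apply, hJ, hcol j]
  have hJJ : J * J = (n:ℝ) • J := by
    ext i j
    simp [Matrix.mul_apply, hJ]
  set M : Matrix (Fin n) (Fin n) ℝ := Q + (n:ℝ)⁻¹ • J with hM
  -- M has nonzero determinant
  have hMdet : M.det ≠ 0 := by
    intro h
    obtain ⟨v, hv, hMv⟩ := (Matrix.exists_mulVec_eq_zero_iff).mpr h
    have hJv : J.mulVec v = fun _ => ∑ k, v k := by
      funext i
      simp [Matrix.mulVec, dotProduct, hJ]
    have hsplit : Q.mulVec v + (n:ℝ)⁻¹ • J.mulVec v = 0 := by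
      rw [hM, Matrix.add_mulVec, Matrix.smul_mulVec] at hMv
      exact hMv
    have hdot : v ⬝ᵥ Q.mulVec v + (n:ℝ)⁻¹ * (∑ k, v k)^2 = 0 := by
      have := congrArg (fun w => v ⬝ᵥ w) hsplit
      simp only [dotProduct_add, dotProduct_smul, dotProduct_zero] at this
      rw [hJv] at this
      have hvd : v ⬝ᵥ (fun _ => ∑ k, v k) = (∑ k, v k)^2 := by
        simp [dotProduct, ← Finset.sum_mul, sq, mul_comm]
      rw [hvd] at this
      simpa [smul_eq_mul] using this
    have h1 : (0:ℝ) ≤ v ⬝ᵥ Q.mulVec v := by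
      have := hQ.dotProduct_mulVec_nonneg v
      simpa using this
    have h2 : (0:ℝ) ≤ (n:ℝ)⁻¹ * (∑ k, v k)^2 := by positivity
    have hq0 : v ⬝ᵥ Q.mulVec v = 0 := by linarith
    have hs0 : (∑ k, v k) = 0 := by
      have : (n:ℝ)⁻¹ * (∑ k, v k)^2 = 0 := by linarith
      have := (mul_eq_zero.mp this).resolve_left (inv_ne_zero hnne)
      exact pow_eq_zero_iff (by norm_num) |>.mp this
    have hQv : Q.mulVec v = 0 := by
      have := (hQ.dotProduct_mulVec_zero_iff v).mp (by simpa using hq0)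
      exact this
    obtain ⟨c, hc⟩ := (hker v).mp hQv
    have : (n:ℝ) * c = 0 := by
      rw [hc] at hs0; simpa [Finset.sum_const, mul_comm] using hs0
    have hc0 : c = 0 := (mul_eq_zero.mp this).resolve_left hnne
    exact hv (by rw [hc, hc0]; rfl)
  have hMunit : IsUnit M.det := isUnit_iff_ne_zero.mpr hMdet
  have hMMi : M * M⁻¹ = 1 := Matrix.mul_nonsing_inv M hMunit
  have hMiM : M⁻¹ * M = 1 := Matrix.nonsing_inv_mul M hMunit
  have hJM : J * M = J := by
    rw [hM, Matrix.mul_add, hJQ, Matrix.mul_smul, hJJ, zero_add, smul_smul,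
      inv_mul_cancel₀ hnne, one_smul]
  have hMJ : M * J = J := by
    rw [hM, Matrix.add_mul, hQJ, Matrix.smul_mul, hJJ, zero_add, smul_smul,
      inv_mul_cancel₀ hnne, one_smul]
  have hJMi : J * M⁻¹ = J := by
    calc J * M⁻¹ = (J * M) * M⁻¹ := by rw [hJM]
    _ = J * (M * M⁻¹) := by rw [Matrix.mul_assoc]
    _ = J := by rw [hMMi, Matrix.mul_one]
  have hMiJ : M⁻¹ * J = J := by
    calc M⁻¹ * J = M⁻¹ * (M * J) := by rw [hMJ]
    _ = (M⁻¹ * M) * J := by rw [Matrix.mul_assoc]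
    _ = J := by rw [hMiM, Matrix.one_mul]
  set X : Matrix (Fin n) (Fin n) ℝ := M⁻¹ - (n:ℝ)⁻¹ • J with hX
  have hQM : Q = M - (n:ℝ)⁻¹ • J := by rw [hM]; ring_nf; abel
  have hQMi : Q * M⁻¹ = 1 - (n:ℝ)⁻¹ • J := by
    rw [hQM, Matrix.sub_mul, hMMi, Matrix.smul_mul, hJMi]
  have hMiQ : M⁻¹ * Q = 1 - (n:ℝ)⁻¹ • J := by
    rw [hQM, Matrix.mul_sub, hMiM, Matrix.mul_smul, hMiJ]
  have hQX : Q * X = 1 - (n:ℝ)⁻¹ • J := by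
    rw [hX, Matrix.mul_sub, hQMi, Matrix.mul_smul, hQJ, smul_zero, sub_zero]
  have hXQ : X * Q = 1 - (n:ℝ)⁻¹ • J := by
    rw [hX, Matrix.sub_mul, hMiQ, Matrix.smul_mul, hJQ, smul_zero, sub_zero]
  have hJX : J * X = 0 := by
    rw [hX, Matrix.mul_sub, hJMi, Matrix.mul_smul, hJJ, smul_smul,
      inv_mul_cancel₀ hnne, one_smul, sub_self]
  have hXJ : X * J = 0 := by
    rw [hX, Matrix.sub_mul, hMiJ, Matrix.smul_mul, hJJ, smul_smul,
      inv_mul_cancel₀ hnne, one_smul, sub_self]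
  have hJT : Jᵀ = J := by ext i j; simp [hJ]
  have e1 : Q * X * Q = Q := by
    rw [hQX, Matrix.sub_mul, Matrix.one_mul, Matrix.smul_mul, hJQ, smul_zero, sub_zero]
  have e2 : X * Q * X = X := by
    rw [hXQ, Matrix.sub_mul, Matrix.one_mul, Matrix.smul_mul, hJX, smul_zero, sub_zero]
  have e3 : (Q * X)ᵀ = Q * X := by
    rw [hQX, Matrix.transpose_sub, Matrix.transpose_one, Matrix.transpose_smul, hJT]
  have e4 : (X * Q)ᵀ = X * Q := by
    rw [hXQ, Matrix.transpose_sub, Matrix.transpose_one, Matrix.transpose_smul, hJT]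
  have hex : ∃ Y : Matrix (Fin n) (Fin n) ℝ,
      Q * Y * Q = Q ∧ Y * Q * Y = Y ∧ (Q * Y)ᵀ = Q * Y ∧ (Y * Q)ᵀ = Y * Q :=
    ⟨X, e1, e2, e3, e4⟩
  set B : Matrix (Fin n) (Fin n) ℝ := pinv Q with hB
  have hBspec : Q * B * Q = Q ∧ B * Q * B = B ∧ (Q * B)ᵀ = Q * B ∧ (B * Q)ᵀ = B * Q := by
    rw [hB]
    unfold pinv
    rw [dif_pos hex]
    exact hex.choose_spec
  have hQBQ : Q * B * Q = Q := hBspec.1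
  -- main argument: the bordered matrix has trivial kernel
  set N := Matrix.fromBlocks (0 : Matrix (Fin 1) (Fin 1) ℝ)
      (Matrix.of fun _ _ => (1 : ℝ)) (Matrix.of fun _ _ => (1 : ℝ)) Ω with hN
  rw [isUnit_iff_ne_zero]
  intro hdet
  obtain ⟨u, hu, hNu⟩ := (Matrix.exists_mulVec_eq_zero_iff).mpr hdet
  set a : ℝ := u (Sum.inl 0) with ha
  set v : Fin n → ℝ := fun j => u (Sum.inr j) with hv
  have htop : ∑ j, v j = 0 := by
    have := congrFun hNu (Sum.inl 0)
    simpa [hN, Matrix.mulVec, dotProduct, Fintype.sum_sum_type, hv] using this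
  have hbot : ∀ i, a + (Ω.mulVec v) i = 0 := by
    intro i
    have := congrFun hNu (Sum.inr i)
    simpa [hN, Matrix.mulVec, dotProduct, Fintype.sum_sum_type, ha, hv] using this
  set s : ℝ := ∑ j, ζ j * v j with hs
  have hΩv : ∀ i, (Ω.mulVec v) i = s - 2 * (B.mulVec v) i := by
    intro i
    rw [hΩ]
    simp only [Matrix.add_mulVec, Matrix.sub_mulVec, Pi.add_apply, Pi.sub_apply]
    have h1 : ((Matrix.of fun _ j => ζ j).mulVec v) i = s := by
      simp [Matrix.mulVec, dotProduct, hs]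
    have h2 : ((Matrix.of fun i _ => ζ i).mulVec v) i = 0 := by
      simp [Matrix.mulVec, dotProduct, ← Finset.mul_sum, htop]
    have h3 : ((2 • pinv Q).mulVec v) i = 2 * (B.mulVec v) i := by
      rw [two_smul, Matrix.add_mulVec]
      simp [hB, two_mul]
    rw [h1, h2, h3]
    ring
  have hBv : B.mulVec v = fun _ => (a + s) / 2 := by
    funext i
    have := hbot i
    rw [hΩv i] at this
    linarith
  have hQBv : Q.mulVec (B.mulVec v) = 0 := by
    rw [hBv]
    have : (fun _ : Fin n => (a + s) / 2) = ((a+s)/2) • (fun _ : Fin n => (1:ℝ)) := by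
      funext i; simp
    rw [this, Matrix.mulVec_smul, hQ1, smul_zero]
  -- v is in the range of Q
  have hJv : J.mulVec v = 0 := by
    funext i
    simp [Matrix.mulVec, dotProduct, hJ, htop]
  set w : Fin n → ℝ := M⁻¹.mulVec v with hw
  have hQw : Q.mulVec w = v := by
    rw [hw, Matrix.mulVec_mulVec, hQMi, Matrix.sub_mulVec, Matrix.one_mulVec,
      Matrix.smul_mulVec, hJv, smul_zero, sub_zero]
  have hv0 : v = 0 := by
    have h2 : Q.mulVec (B.mulVec (Q.mulVec w)) = Q.mulVec w := by
      rw [Matrix.mulVec_mulVec, Matrix.mulVec_mulVec, hQBQ]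
    rw [hQw] at h2
    rw [hQBv] at h2
    exact h2.symm
  have hs0 : s = 0 := by
    rw [hs]
    simp [hv0]
  have ha0 : a = 0 := by
    have i0 : Fin n := ⟨0, lt_of_lt_of_le (by norm_num) hn⟩
    have h := congrFun hBv i0
    rw [hv0, Matrix.mulVec_zero] at h
    have h' : (0:ℝ) = (a + s) / 2 := by simpa using h
    linarith [hs0, h']
  apply hu
  funext x
  cases x with
  | inl i =>
    have : i = 0 := Subsingleton.elim i 0
    rw [this]; exact ha0
  | inr j =>
    have : v j = 0 := by rw [hv0]; rfl
    exact this
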